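/- Let 0 ≤ k < N and let A be an N×N Hermitian matrix that is k-PMP but not (k+1)-PMP. Then A has at least k positive eigenvalues and at least one negative eigenvalue. -/

import Mathlib

open Matrix
open scoped ComplexOrder
set_option maxHeartbeats 1000000

section Aux

variable {R : Type*} [CommRing R] {n : Type*} [Fintype n] [DecidableEq n]

lemma det_unit_rows (M : Matrix n n R) (s : Finset n) :
    (Matrix.of (fun i => if i ∈ s then M i else Pi.single i (1:R))).det
      = (M.submatrix (fun i : s => (i : n)) (fun i : s => (i : n))).det := by
  classical
  set M' : Matrix n n R := Matrix.of (fun i => if i ∈ s then M i else Pi.single i (1:R)) with hM'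
  rw [← Matrix.det_submatrix_equiv_self (Equiv.sumCompl (· ∈ s)) M']
  have hb : M'.submatrix (Equiv.sumCompl (· ∈ s)) (Equiv.sumCompl (· ∈ s)) =
      Matrix.fromBlocks (M.submatrix (fun i : s => (i : n)) (fun i : s => (i : n)))
        (M.submatrix (fun i : s => (i : n)) (fun i : {x // ¬ x ∈ s} => (i : n))) 0 1 := by
    ext i j
    rcases i with ⟨i, hi⟩ | ⟨i, hi⟩ <;> rcases j with ⟨j, hj⟩ | ⟨j, hj⟩
    · simp [M', hi]
    · simp [M', hi]
    · simp only [Matrix.submatrix_apply, Equiv.sumCompl_apply_inr, Equiv.sumCompl_apply_inl,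
        Matrix.of_apply, M', if_neg hi, Matrix.fromBlocks_apply₂₁, Matrix.zero_apply,
        Pi.single_apply]
      exact if_neg (fun (h : j = i) => hi (h ▸ hj))
    · simp only [Matrix.submatrix_apply, Equiv.sumCompl_apply_inr, Matrix.of_apply, M',
        if_neg hi, Matrix.fromBlocks_apply₂₂, Pi.single_apply, Matrix.one_apply, Subtype.mk.injEq]
      by_cases h : j = i
      · subst h; simp
      · rw [if_neg h, if_neg (fun hh => h hh.symm)]
  rw [hb, Matrix.det_fromBlocks_zero₂₁, Matrix.det_one, mul_one]

lemma det_add_smul_one (M : Matrix n n R) (t : R) :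
    (M + t • (1 : Matrix n n R)).det
      = ∑ s : Finset n, t ^ (sᶜ.card) *
          (M.submatrix (fun i : s => (i : n)) (fun i : s => (i : n))).det := by
  classical
  have hrows : (M + t • (1 : Matrix n n R)) =
      Matrix.of ((fun i => M i) + (fun i => t • (Pi.single i (1:R) : n → R))) := by
    ext i j
    simp [Matrix.one_apply, Pi.single_apply, mul_comm]
    split <;> rename_i h <;> simp [h, eq_comm]
  rw [hrows]
  have hdet : ∀ N : Matrix n n R, N.det = Matrix.detRowAlternating N := fun _ => rfl
  rw [hdet]
  show Matrix.detRowAlternating ((fun i => M i) + fun i => t • (Pi.single i (1:R) : n → R)) = _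
  rw [show (Matrix.detRowAlternating ((fun i => M i) + fun i => t • (Pi.single i (1:R) : n → R)) : R)
      = ∑ s : Finset n, Matrix.detRowAlternating
          (s.piecewise (fun i => M i) (fun i => t • (Pi.single i (1:R) : n → R)))
      from (Matrix.detRowAlternating.toMultilinearMap.map_add_univ _ _)]
  refine Finset.sum_congr rfl (fun s _ => ?_)
  set m : n → n → R := fun i => if i ∈ s then M i else Pi.single i (1:R) with hm
  have hpiece : s.piecewise (fun i => M i) (fun i => t • (Pi.single i (1:R) : n → R))
      = sᶜ.piecewise (fun i => t • m i) m := by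
    ext i j
    by_cases h : i ∈ s <;>
      simp [Finset.piecewise, h, hm]
  rw [hpiece, show (Matrix.detRowAlternating (sᶜ.piecewise (fun i => t • m i) m) : R)
      = (∏ _i ∈ sᶜ, t) • Matrix.detRowAlternating m
      from (Matrix.detRowAlternating.toMultilinearMap.map_piecewise_smul (fun _ => t) m sᶜ)]
  rw [Finset.prod_const, smul_eq_mul]
  congr 1
  exact det_unit_rows M s

lemma quad_form_eq (M : Matrix n n ℂ) (hM : M.IsHermitian) (w : n → ℂ) :
    star ((hM.eigenvectorUnitary : Matrix n n ℂ) *ᵥ w) ⬝ᵥ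
      (M *ᵥ ((hM.eigenvectorUnitary : Matrix n n ℂ) *ᵥ w))
    = ((∑ i, hM.eigenvalues i * Complex.normSq (w i) : ℝ) : ℂ) := by
  set U : Matrix n n ℂ := (hM.eigenvectorUnitary : Matrix n n ℂ) with hU
  have hsU : star U * U = 1 := hM.eigenvectorUnitary.prop.1
  have h1 : M *ᵥ (U *ᵥ w) = U *ᵥ ((Matrix.diagonal (RCLike.ofReal ∘ hM.eigenvalues)) *ᵥ w) := by
    rw [mulVec_mulVec, mulVec_mulVec]
    conv_lhs => rw [hM.spectral_theorem]
    rw [Unitary.conjStarAlgAut_apply]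
    rw [Matrix.mul_assoc, Matrix.mul_assoc]
    rw [show (star U) * U = 1 from hsU, Matrix.mul_one]
  rw [h1]
  have h2 : star (U *ᵥ w) ⬝ᵥ (U *ᵥ ((Matrix.diagonal (RCLike.ofReal ∘ hM.eigenvalues)) *ᵥ w))
      = star w ⬝ᵥ ((Matrix.diagonal (RCLike.ofReal ∘ hM.eigenvalues)) *ᵥ w) := by
    rw [star_mulVec, ← dotProduct_mulVec, mulVec_mulVec, show Uᴴ * U = 1 from hsU, one_mulVec]
  rw [h2]
  rw [dotProduct, Complex.ofReal_sum]
  refine Finset.sum_congr rfl (fun i _ => ?_)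
  rw [mulVec_diagonal]
  push_cast
  simp only [Pi.star_apply, Function.comp_apply, RCLike.star_def]
  rw [Complex.normSq_eq_conj_mul_self]
  exact mul_left_comm ((starRingEnd ℂ) (w i)) ((hM.eigenvalues i : ℂ)) (w i)

lemma exists_neg_eigenvalue (M : Matrix n n ℂ) (hM : M.IsHermitian)
    (x : n → ℂ) (hx : (star x ⬝ᵥ (M *ᵥ x)).re < 0) : ∃ i, hM.eigenvalues i < 0 := by
  by_contra hcon
  push_neg at hcon
  set U : Matrix n n ℂ := (hM.eigenvectorUnitary : Matrix n n ℂ) with hUdef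
  have hx' : x = U *ᵥ (star U *ᵥ x) := by
    rw [mulVec_mulVec, hM.eigenvectorUnitary.prop.2, one_mulVec]
  rw [hx', quad_form_eq M hM (star U *ᵥ x)] at hx
  rw [Complex.ofReal_re] at hx
  have : (0:ℝ) ≤ ∑ i, hM.eigenvalues i * Complex.normSq ((star U *ᵥ x) i) :=
    Finset.sum_nonneg fun i _ => mul_nonneg (hcon i) (Complex.normSq_nonneg _)
  linarith

lemma le_card_pos_eigenvalues (M : Matrix n n ℂ) (hM : M.IsHermitian)
    {ι : Type*} [Fintype ι] (L : (ι → ℂ) →ₗ[ℂ] (n → ℂ))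
    (hL : ∀ c, c ≠ 0 → 0 < (star (L c) ⬝ᵥ (M *ᵥ L c)).re) :
    Fintype.card ι ≤ (Finset.univ.filter fun i => 0 < hM.eigenvalues i).card := by
  classical
  by_contra hcon
  push_neg at hcon
  set P := (Finset.univ.filter fun i => 0 < hM.eigenvalues i) with hP
  set U : Matrix n n ℂ := (hM.eigenvectorUnitary : Matrix n n ℂ) with hUdef
  set T : (ι → ℂ) →ₗ[ℂ] (↥P → ℂ) :=
    (LinearMap.funLeft ℂ ℂ (fun i : ↥P => (i : n))) ∘ₗ (Matrix.mulVecLin (star U)) ∘ₗ L with hT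
  have hTnotinj : ¬ Function.Injective T := by
    intro hinj
    have := LinearMap.finrank_le_finrank_of_injective hinj
    rw [Module.finrank_fintype_fun_eq_card, Module.finrank_fintype_fun_eq_card,
      Fintype.card_coe] at this
    omega
  rw [← LinearMap.ker_eq_bot] at hTnotinj
  obtain ⟨c, hcmem, hc0⟩ := Submodule.ne_bot_iff _ |>.mp hTnotinj
  have hq := hL c hc0
  have hx' : L c = U *ᵥ (star U *ᵥ L c) := by
    rw [mulVec_mulVec, hM.eigenvectorUnitary.prop.2, one_mulVec]
  rw [hx', quad_form_eq M hM (star U *ᵥ L c), Complex.ofReal_re] at hq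
  have hzero : ∀ i : n, 0 < hM.eigenvalues i → (star U *ᵥ L c) i = 0 := by
    intro i hi
    have : T c ⟨i, by simp [hP, hi]⟩ = 0 := by rw [LinearMap.mem_ker.mp hcmem]; rfl
    simpa [hT, LinearMap.funLeft] using this
  have : (∑ i, hM.eigenvalues i * Complex.normSq ((star U *ᵥ L c) i)) ≤ 0 := by
    refine Finset.sum_nonpos fun i _ => ?_
    by_cases hi : 0 < hM.eigenvalues i
    · rw [hzero i hi]; simp
    · exact mul_nonpos_of_nonpos_of_nonneg (not_lt.mp hi) (Complex.normSq_nonneg _)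
  linarith

/-- zero extension of a vector along a predicate -/
noncomputable def pext (p : n → Prop) [DecidablePred p] : ({x // p x} → ℂ) →ₗ[ℂ] (n → ℂ) where
  toFun v := fun j => if h : p j then v ⟨j, h⟩ else 0
  map_add' v w := by ext j; by_cases h : p j <;> simp [h]
  map_smul' a v := by ext j; by_cases h : p j <;> simp [h]

lemma pext_apply_coe (p : n → Prop) [DecidablePred p] (v : {x // p x} → ℂ) (l : {x // p x}) :
    pext p v (l : n) = v l := by
  simp [pext, l.2]

lemma pext_apply_neg (p : n → Prop) [DecidablePred p] (v : {x // p x} → ℂ) {j : n}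
    (hj : ¬ p j) : pext p v j = 0 := by
  simp [pext, hj]

/-- zero extension of a vector on a finset -/
noncomputable def zext (S : Finset n) : (↥S → ℂ) →ₗ[ℂ] (n → ℂ) := pext (· ∈ S)

lemma zext_apply_coe (S : Finset n) (v : ↥S → ℂ) (l : ↥S) : zext S v (l : n) = v l :=
  pext_apply_coe _ v l

lemma zext_apply_not_mem (S : Finset n) (v : ↥S → ℂ) {j : n} (hj : j ∉ S) : zext S v j = 0 :=
  pext_apply_neg _ v hj

lemma zext_quad (A : Matrix n n ℂ) (S : Finset n) (v : ↥S → ℂ) :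
    star (zext S v) ⬝ᵥ (A *ᵥ zext S v)
      = star v ⬝ᵥ ((A.submatrix (fun i : S => (i : n)) (fun i : S => (i : n))) *ᵥ v) := by
  classical
  have hmv : ∀ j : n, (A *ᵥ zext S v) j = ∑ l : ↥S, A j (l : n) * v l := by
    intro j
    rw [mulVec, dotProduct]
    calc ∑ i : n, A j i * zext S v i
        = ∑ i ∈ S, A j i * zext S v i :=
          (Finset.sum_subset (Finset.subset_univ S)
            (fun x _ hx => by rw [zext_apply_not_mem S v hx, mul_zero])).symm
      _ = ∑ l : ↥S, A j (l : n) * zext S v (l : n) := (Finset.sum_coe_sort S _).symm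
      _ = ∑ l : ↥S, A j (l : n) * v l := by
          refine Finset.sum_congr rfl fun l _ => ?_
          rw [zext_apply_coe]
  rw [dotProduct]
  calc ∑ j : n, star (zext S v) j * (A *ᵥ zext S v) j
      = ∑ j ∈ S, star (zext S v) j * (A *ᵥ zext S v) j :=
        (Finset.sum_subset (Finset.subset_univ S)
          (fun x _ hx => by simp [zext_apply_not_mem S v hx])).symm
    _ = ∑ j : ↥S, star (zext S v) (j : n) * (A *ᵥ zext S v) (j : n) :=
        (Finset.sum_coe_sort S _).symm
    _ = ∑ j : ↥S, star v j *
          ((A.submatrix (fun i : S => (i : n)) (fun i : S => (i : n))) *ᵥ v) j := by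
        refine Finset.sum_congr rfl fun j _ => ?_
        rw [hmv]
        simp only [Pi.star_apply, zext_apply_coe, mulVec, dotProduct, submatrix_apply]
    _ = _ := rfl

lemma herm_prod_eq_sum (B : Matrix n n ℂ) (hB : B.IsHermitian) (t : ℝ) :
    ∏ l, (hB.eigenvalues l + t)
      = ∑ s : Finset n, t ^ (sᶜ.card) *
          (B.submatrix (fun i : s => (i : n)) (fun i : s => (i : n))).det.re := by
  classical
  set U : Matrix n n ℂ := (hB.eigenvectorUnitary : Matrix n n ℂ) with hU
  have hBt : B + (t:ℂ) • 1 =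
      U * (Matrix.diagonal (RCLike.ofReal ∘ hB.eigenvalues) + (t:ℂ) • 1) * star U := by
    rw [Matrix.mul_add, Matrix.add_mul]
    congr 1
    · exact hB.spectral_theorem
    · rw [Matrix.mul_smul, Matrix.mul_one, Matrix.smul_mul, hB.eigenvectorUnitary.prop.2]
  have hdiag : Matrix.diagonal (RCLike.ofReal ∘ hB.eigenvalues) + (t:ℂ) • 1
      = Matrix.diagonal (fun l => (hB.eigenvalues l : ℂ) + t) := by
    ext i j
    by_cases h : i = j <;> simp [Matrix.diagonal, Matrix.one_apply, h]
  have hdet2 : (B + (t:ℂ) • 1).det = ∏ l, ((hB.eigenvalues l : ℂ) + t) := by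
    rw [hBt, Matrix.det_mul, Matrix.det_mul, mul_comm, ← mul_assoc, ← Matrix.det_mul,
      show star U * U = 1 from hB.eigenvectorUnitary.prop.1, Matrix.det_one, one_mul,
      hdiag, Matrix.det_diagonal]
  have hc := det_add_smul_one B (t : ℂ)
  rw [hdet2] at hc
  have hre := congrArg Complex.re hc
  rw [show (∏ l, ((hB.eigenvalues l : ℂ) + t)) = ((∏ l, (hB.eigenvalues l + t) : ℝ) : ℂ) by
      push_cast; rfl] at hre
  rw [Complex.ofReal_re] at hre
  rw [hre, Complex.re_sum]
  refine Finset.sum_congr rfl fun s _ => ?_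
  rw [show ((t:ℂ) ^ (sᶜ.card)) = ((t ^ (sᶜ.card) : ℝ) : ℂ) by push_cast; rfl,
    Complex.re_ofReal_mul]

end Aux

/-- A Hermitian matrix is `k`-PMP if all its principal minors of size at most `k`
are non-negative. -/
def kPMP {N : ℕ} (k : ℕ) (A : Matrix (Fin N) (Fin N) ℂ) : Prop :=
  ∀ S : Finset (Fin N), S.card ≤ k →
    0 ≤ (A.submatrix (fun i : S => (i : Fin N)) (fun i : S => (i : Fin N))).det

/-- If an `N × N` Hermitian matrix is `k`-PMP but not `(k+1)`-PMP (`0 ≤ k < N`),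
then it has at least `k` positive eigenvalues and at least one negative
eigenvalue. -/
theorem stmt9 {N k : ℕ} (hkN : k < N) (A : Matrix (Fin N) (Fin N) ℂ)
    (hA : A.IsHermitian) (h1 : kPMP k A) (h2 : ¬ kPMP (k + 1) A) :
    k ≤ (Finset.univ.filter fun i => 0 < hA.eigenvalues i).card ∧
      ∃ i, hA.eigenvalues i < 0 := by
  classical
  rw [kPMP] at h2
  push_neg at h2
  obtain ⟨S, hScard, hSneg⟩ := h2
  have hScard' : S.card = k + 1 := by
    rcases Nat.lt_or_ge S.card (k+1) with h | h
    · exact absurd (h1 S (by omega)) hSneg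
    · omega
  set B := A.submatrix (fun i : S => (i : Fin N)) (fun i : S => (i : Fin N)) with hBdef
  have hB : B.IsHermitian := by
    rw [Matrix.IsHermitian, hBdef, Matrix.conjTranspose_submatrix, hA.eq]
  set μ := hB.eigenvalues with hμdef
  have hKcard : Fintype.card ↥S = k + 1 := by rw [Fintype.card_coe, hScard']
  have hdetB : B.det = ((∏ l, μ l : ℝ) : ℂ) := by
    rw [hB.det_eq_prod_eigenvalues]; push_cast; rfl
  have hprodneg : (∏ l, μ l) < 0 := by
    by_contra hcon
    push_neg at hcon
    refine hSneg ?_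
    rw [hdetB]
    exact_mod_cast Complex.zero_le_real.mpr hcon
  clear hSneg
  -- proper principal minors of B are nonnegative (as complex numbers)
  have hminor : ∀ s : Finset ↥S, s ≠ Finset.univ →
      0 ≤ (B.submatrix (fun i : s => (i : ↥S)) (fun i : s => (i : ↥S))).det := by
    intro s hs
    set T : Finset (Fin N) := s.image (fun l : ↥S => (l : Fin N)) with hT
    have hinj : Function.Injective (fun l : ↥S => (l : Fin N)) := Subtype.val_injective
    have hTcard : T.card = s.card := Finset.card_image_of_injective _ hinj
    have hscard : s.card ≤ k := by
      have hlt := Finset.card_lt_card ((Finset.subset_univ s).ssubset_of_ne hs)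
      rw [Finset.card_univ, hKcard] at hlt
      omega
    have h0 := h1 T (by omega)
    have hbij : Function.Bijective
        (fun l : ↥s => (⟨((l : ↥S) : Fin N), Finset.mem_image_of_mem _ l.2⟩ : ↥T)) := by
      constructor
      · intro a b hab
        have h1' : ((a : ↥S) : Fin N) = ((b : ↥S) : Fin N) := by
          have := Subtype.ext_iff.mp hab
          simpa using this
        exact Subtype.ext (Subtype.ext h1')
      · rintro ⟨t, ht⟩
        obtain ⟨l, hl, hlt⟩ := Finset.mem_image.mp ht
        exact ⟨⟨l, hl⟩, Subtype.ext hlt⟩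
    set e := Equiv.ofBijective _ hbij with he
    calc (0:ℂ) ≤ (A.submatrix (fun i : T => (i : Fin N)) (fun i : T => (i : Fin N))).det := h0
      _ = ((A.submatrix (fun i : T => (i : Fin N)) (fun i : T => (i : Fin N))).submatrix
            e e).det := (Matrix.det_submatrix_equiv_self e _).symm
      _ = (B.submatrix (fun i : s => (i : ↥S)) (fun i : s => (i : ↥S))).det := by
          rw [hBdef, Matrix.submatrix_submatrix, Matrix.submatrix_submatrix]; rfl
  -- the coefficient function
  set dd : Finset ↥S → ℝ :=
    fun s => (B.submatrix (fun i : s => (i : ↥S)) (fun i : s => (i : ↥S))).det.re with hdd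
  have hddempty : dd ∅ = 1 := by
    haveI : IsEmpty ↥(∅ : Finset ↥S) := Finset.isEmpty_coe_sort.mpr rfl
    simp only [hdd]
    rw [Matrix.det_isEmpty]
    simp
  have hddnn : ∀ s : Finset ↥S, s ≠ Finset.univ → 0 ≤ dd s := by
    intro s hs
    have := hminor s hs
    rw [Complex.le_def] at this
    simpa using this.1
  have hdduniv : dd Finset.univ = ∏ l, μ l := by
    simp only [hdd]
    have : (B.submatrix (fun i : (Finset.univ : Finset ↥S) => (i : ↥S))
        (fun i : (Finset.univ : Finset ↥S) => (i : ↥S))).det = B.det := by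
      have hu : B.submatrix (fun i : (Finset.univ : Finset ↥S) => (i : ↥S))
            (fun i : (Finset.univ : Finset ↥S) => (i : ↥S))
          = B.submatrix (Equiv.subtypeUnivEquiv (fun x => Finset.mem_univ x))
              (Equiv.subtypeUnivEquiv (fun x => Finset.mem_univ x)) := by
        ext i j; rfl
      rw [hu]
      exact Matrix.det_submatrix_equiv_self _ B
    rw [this, hdetB, Complex.ofReal_re]
  set ff : ℝ → ℝ := fun t => ∏ l, (μ l + t) with hff
  have hid : ∀ t : ℝ, ff t = ∑ s : Finset ↥S, t ^ (sᶜ.card) * dd s :=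
    fun t => herm_prod_eq_sum B hB t
  have hcardcompl : ∀ s : Finset ↥S, s = ∅ → (sᶜ.card) = k + 1 := by
    intro s hs; subst hs; rw [Finset.compl_empty, Finset.card_univ, hKcard]
  -- strict monotonicity on [0, ∞)
  have hmono : ∀ a b : ℝ, 0 ≤ a → a < b → ff a < ff b := by
    intro a b ha hab
    rw [hid, hid]
    refine Finset.sum_lt_sum (fun s _ => ?_) ⟨∅, Finset.mem_univ _, ?_⟩
    · by_cases hs : s = Finset.univ
      · subst hs
        rw [Finset.compl_univ, Finset.card_empty, pow_zero, pow_zero]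
      · exact mul_le_mul_of_nonneg_right
          (pow_le_pow_left₀ ha hab.le _) (hddnn s hs)
    · rw [hddempty, mul_one, mul_one, hcardcompl ∅ rfl]
      exact pow_lt_pow_left₀ hab ha (Nat.succ_ne_zero k)
  -- quantitative lower bound
  have hlb : ∀ a b : ℝ, 0 ≤ a → a ≤ b → b ^ (k+1) - a ^ (k+1) ≤ ff b - ff a := by
    intro a b ha hab
    rw [hid, hid, ← Finset.sum_sub_distrib]
    have h₀ : b ^ ((∅ᶜ : Finset ↥S).card) * dd ∅ - a ^ ((∅ᶜ : Finset ↥S).card) * dd ∅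
        = b ^ (k+1) - a ^ (k+1) := by
      rw [hddempty, mul_one, mul_one, hcardcompl ∅ rfl]
    rw [← h₀]
    refine Finset.single_le_sum
      (f := fun s : Finset ↥S => b ^ (sᶜ.card) * dd s - a ^ (sᶜ.card) * dd s)
      (fun s _ => ?_) (Finset.mem_univ ∅)
    show 0 ≤ b ^ (sᶜ.card) * dd s - a ^ (sᶜ.card) * dd s
    by_cases hs : s = Finset.univ
    · subst hs
      rw [Finset.compl_univ, Finset.card_empty, pow_zero, pow_zero]
      simp
    · have := mul_le_mul_of_nonneg_right (pow_le_pow_left₀ ha hab (sᶜ.card)) (hddnn s hs)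
      linarith
  -- eigenvalue structure of B
  have hμne : ∀ l, μ l ≠ 0 := by
    intro l hl
    have : (∏ l, μ l) = 0 := Finset.prod_eq_zero (Finset.mem_univ l) hl
    linarith
  have hexneg : ∃ l, μ l < 0 := by
    by_contra hcon
    push_neg at hcon
    have : (0:ℝ) ≤ ∏ l, μ l := Finset.prod_nonneg (fun l _ => hcon l)
    linarith
  have hroot : ∀ l, ff (-μ l) = 0 := by
    intro l
    refine Finset.prod_eq_zero (Finset.mem_univ l) (by ring)
  have huniq : ∀ i j, μ i < 0 → μ j < 0 → i = j := by
    intro i j hi hj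
    by_contra hij
    have heq : μ i = μ j := by
      by_contra hne
      rcases Ne.lt_or_gt hne with h | h
      · have := hmono (-μ j) (-μ i) (by linarith) (by linarith)
        rw [hroot i, hroot j] at this; exact lt_irrefl _ this
      · have := hmono (-μ i) (-μ j) (by linarith) (by linarith)
        rw [hroot i, hroot j] at this; exact lt_irrefl _ this
    set t0 : ℝ := -μ i with ht0def
    have ht0 : 0 < t0 := by rw [ht0def]; linarith
    set rest : ℝ → ℝ := fun t => ∏ l ∈ (Finset.univ.erase i).erase j, (μ l + t) with hrest
    have hsplit : ∀ t, ff t = (μ i + t) * ((μ j + t) * rest t) := by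
      intro t
      show (∏ l, (μ l + t)) = (μ i + t) * ((μ j + t) * rest t)
      rw [← Finset.mul_prod_erase _ _ (Finset.mem_univ i)]
      congr 1
      rw [← Finset.mul_prod_erase _ _
        (Finset.mem_erase.mpr ⟨fun h => hij h.symm, Finset.mem_univ j⟩)]
    set H : ℝ := ∏ l ∈ (Finset.univ.erase i).erase j, (|μ l| + t0) with hH
    have hH0 : 0 ≤ H :=
      Finset.prod_nonneg (fun l _ => add_nonneg (abs_nonneg _) ht0.le)
    have hrestle : ∀ t, 0 ≤ t → t ≤ t0 → |rest t| ≤ H := by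
      intro t h0t ht
      rw [hrest, Finset.abs_prod]
      refine Finset.prod_le_prod (fun _ _ => abs_nonneg _) (fun l _ => ?_)
      calc |μ l + t| ≤ |μ l| + |t| := abs_add_le _ _
        _ ≤ |μ l| + t0 := by rw [abs_of_nonneg h0t]; linarith
    set ε : ℝ := min (t0/2) ((t0/2)^k / (H+1)) with hε
    have hεpos : 0 < ε :=
      lt_min (by linarith) (div_pos (pow_pos (by linarith) k) (by linarith))
    have hε2 : ε ≤ t0/2 := min_le_left _ _
    have key1 : ε * (t0/2)^k ≤ ff t0 - ff (t0 - ε) := by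
      have h1' := hlb (t0 - ε) t0 (by linarith) (by linarith)
      have hba : (t0 - ε)^k ≤ t0^k := pow_le_pow_left₀ (by linarith) (by linarith) k
      have hba2 : (t0/2)^k ≤ (t0 - ε)^k := pow_le_pow_left₀ (by linarith) (by linarith) k
      have hexp : t0 ^ (k+1) - (t0 - ε) ^ (k+1) ≥ ε * (t0 - ε)^k := by
        rw [pow_succ, pow_succ]
        nlinarith [pow_nonneg (show (0:ℝ) ≤ t0 - ε by linarith) k]
      nlinarith
    have key2 : ff t0 - ff (t0 - ε) ≤ ε^2 * H := by
      have h0 : ff t0 = 0 := by rw [show t0 = -μ i from rfl]; exact hroot i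
      have h1' : ff (t0 - ε) = ε^2 * rest (t0 - ε) := by
        rw [hsplit, show μ i + (t0 - ε) = -ε by rw [ht0def]; ring,
          show μ j + (t0 - ε) = -ε by rw [ht0def, ← heq]; ring]
        ring
      rw [h0, h1']
      have := hrestle (t0 - ε) (by linarith) (by linarith)
      have h2' : -rest (t0 - ε) ≤ H := (neg_le_abs _).trans this
      nlinarith [sq_nonneg ε]
    have final1 : (t0/2)^k ≤ ε * H := by
      have hch : ε * (t0/2)^k ≤ ε * (ε * H) := by nlinarith
      exact (mul_le_mul_iff_right₀ hεpos).mp hch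
    have final2 : ε * H < (t0/2)^k := by
      have hεle : ε ≤ (t0/2)^k / (H+1) := min_le_right _ _
      have hp : 0 < (t0/2)^k := pow_pos (by linarith) k
      have : ε * H ≤ ((t0/2)^k / (H+1)) * H := mul_le_mul_of_nonneg_right hεle hH0
      calc ε * H ≤ ((t0/2)^k / (H+1)) * H := this
        _ < (t0/2)^k := by
            rw [div_mul_eq_mul_div, div_lt_iff₀ (by linarith)]
            nlinarith
    linarith
  obtain ⟨i0, hi0⟩ := hexneg
  have hpos : ∀ l, l ≠ i0 → 0 < μ l := by
    intro l hl
    rcases lt_trichotomy (μ l) 0 with h | h | h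
    · exact absurd (huniq l i0 h hi0) hl
    · exact absurd h (hμne l)
    · exact h
  set U : Matrix ↥S ↥S ℂ := (hB.eigenvectorUnitary : Matrix ↥S ↥S ℂ) with hU
  constructor
  · -- at least k positive eigenvalues
    set L : ({l : ↥S // l ≠ i0} → ℂ) →ₗ[ℂ] (Fin N → ℂ) :=
      (zext S) ∘ₗ (Matrix.mulVecLin U) ∘ₗ (pext (· ≠ i0)) with hL
    have hcardι : Fintype.card {l : ↥S // l ≠ i0} = k := by
      rw [Fintype.card_subtype_compl, Fintype.card_subtype_eq, hKcard]
      omega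
    have hq : ∀ c, c ≠ 0 → 0 < (star (L c) ⬝ᵥ (A *ᵥ L c)).re := by
      intro c hc
      have : L c = zext S (U *ᵥ pext (· ≠ i0) c) := rfl
      rw [this, zext_quad, ← hBdef, quad_form_eq B hB, Complex.ofReal_re]
      refine Finset.sum_pos' (fun l _ => ?_) ?_
      · by_cases hl : l = i0
        · subst hl
          rw [pext_apply_neg _ _ (by simp)]
          simp
        · exact mul_nonneg (hpos l hl).le (Complex.normSq_nonneg _)
      · obtain ⟨a, ha⟩ := Function.ne_iff.mp hc
        refine ⟨(a : ↥S), Finset.mem_univ _, ?_⟩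
        rw [pext_apply_coe]
        exact mul_pos (hpos _ a.2) (Complex.normSq_pos.mpr (by simpa using ha))
    have := le_card_pos_eigenvalues A hA L hq
    rwa [hcardι] at this
  · -- a negative eigenvalue
    set x : Fin N → ℂ := zext S (U *ᵥ Pi.single i0 1) with hx
    refine exists_neg_eigenvalue A hA x ?_
    rw [hx, zext_quad, ← hBdef, quad_form_eq B hB, Complex.ofReal_re]
    have : ∑ l, μ l * Complex.normSq ((Pi.single i0 1 : ↥S → ℂ) l) = μ i0 := by
      rw [Finset.sum_eq_single i0]
      · simp
      · intro b _ hb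
        rw [Pi.single_apply, if_neg hb]
        simp
      · intro h; exact absurd (Finset.mem_univ i0) h
    rw [this]
    exact hi0
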